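/- Let ρ be a left-continuous convex modular on a real vector space X and let Λ : X_ρ → ℝ be a linear functional. Consider: (i) Λ is continuous with respect to the modular topology, i.e., Λ⁻¹(U) is τ_ρ-open for every open U ⊆ ℝ; (iii) for every sequence (x_j) ⊆ X_ρ with ρ(x_j) → 0 one has Λ(x_j) → 0; (iv) Λ is bounded on {x ∈ X_ρ : ρ(x) < 1}; (v) Λ is bounded on {x ∈ X_ρ : ρ(x) ≤ 1}; (vi) Λ is bounded on {x ∈ X_ρ : ρ(x − x₀) ≤ r} for every x₀ ∈ X_ρ and r > 0; (vii) Λ is bounded on {x ∈ X_ρ : ρ(x − x₀) < r} for every x₀ ∈ X_ρ and r > 0; (viii) Λ is bounded on every set A ⊆ X_ρ of finite modular diameter. Then (i) ⇔ (iii) ⇒ (iv) ⇔ (v) ⇔ (vi) ⇔ (vii) ⇒ (viii), and (i) implies that Λ is bounded with respect to the Luxemburg norm, i.e., there exists C ≥ 0 with |Λ(x)| ≤ C‖x‖_ρ for all x ∈ X_ρ. -/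

import Mathlib

open Filter Topology ENNReal

/-- A convex modular on a real vector space `X`. -/
structure IsConvexModular {X : Type*} [AddCommGroup X] [Module ℝ X] (ρ : X → ℝ≥0∞) : Prop where
  zero_iff : ∀ u : X, ρ u = 0 ↔ u = 0
  neg_eq : ∀ u : X, ρ (-u) = ρ u
  convex : ∀ α : ℝ, 0 ≤ α → α ≤ 1 → ∀ u v : X,
    ρ (α • u + (1 - α) • v) ≤ ENNReal.ofReal α * ρ u + ENNReal.ofReal (1 - α) * ρ v

/-- `X_ρ`, the modular vector space associated to `ρ`. -/
def modularSet {X : Type*} [AddCommGroup X] [Module ℝ X] (ρ : X → ℝ≥0∞) : Set X :=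
  {v : X | ∃ l : ℝ, 0 < l ∧ ρ (l • v) < ⊤}

/-- A set `A ⊆ X_ρ` is `τ_ρ`-open if every point of `A` contains a modular ball around it. -/
def IsTauRhoOpen {X : Type*} [AddCommGroup X] [Module ℝ X] (ρ : X → ℝ≥0∞) (A : Set X) : Prop :=
  A ⊆ modularSet ρ ∧
    ∀ x ∈ A, ∃ ε : ℝ, 0 < ε ∧ {y ∈ modularSet ρ | ρ (y - x) < ENNReal.ofReal ε} ⊆ A

/-- `ρ` is left-continuous. -/
def IsLeftContinuousModular {X : Type*} [AddCommGroup X] [Module ℝ X] (ρ : X → ℝ≥0∞) : Prop :=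
  ∀ (u : X) (l₀ : ℝ), 0 < l₀ →
    Tendsto (fun l : ℝ => ρ (l • u)) (nhdsWithin l₀ (Set.Iio l₀)) (nhds (ρ (l₀ • u)))

/-- The Luxemburg norm `‖x‖_ρ := inf {λ > 0 : ρ(x/λ) ≤ 1}`. -/
noncomputable def luxNorm {X : Type*} [AddCommGroup X] [Module ℝ X] (ρ : X → ℝ≥0∞) (x : X) : ℝ :=
  sInf {l : ℝ | 0 < l ∧ ρ (l⁻¹ • x) ≤ 1}


section helpers
variable {X : Type*} [AddCommGroup X] [Module ℝ X] {ρ : X → ℝ≥0∞} (hρ : IsConvexModular ρ)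
include hρ

lemma rho_zero : ρ (0 : X) = 0 := (hρ.zero_iff 0).mpr rfl

lemma rho_smul_le {t : ℝ} (h0 : 0 ≤ t) (h1 : t ≤ 1) (u : X) :
    ρ (t • u) ≤ ENNReal.ofReal t * ρ u := by
  have := hρ.convex t h0 h1 u 0
  simpa [rho_zero hρ] using this

lemma rho_abs_smul (a : ℝ) (x : X) : ρ (a • x) = ρ (|a| • x) := by
  rcases abs_cases a with ⟨h, _⟩ | ⟨h, _⟩
  · rw [h]
  · rw [h, neg_smul, hρ.neg_eq]

lemma zero_mem_modularSet : (0 : X) ∈ modularSet ρ :=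
  ⟨1, one_pos, by simp [rho_zero hρ]⟩

lemma smul_mem_modularSet (c : ℝ) {x : X} (hx : x ∈ modularSet ρ) :
    c • x ∈ modularSet ρ := by
  rcases eq_or_ne c 0 with rfl | hc
  · simpa using zero_mem_modularSet hρ
  · obtain ⟨l, hl, hfin⟩ := hx
    refine ⟨l / |c|, div_pos hl (abs_pos.mpr hc), ?_⟩
    rw [smul_smul, rho_abs_smul hρ]
    have : |l / |c| * c| = l := by
      rw [abs_mul, abs_div, abs_abs, abs_of_pos hl, div_mul_cancel₀]
      exact abs_ne_zero.mpr hc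
    rwa [this]

lemma neg_mem_modularSet {x : X} (hx : x ∈ modularSet ρ) : -x ∈ modularSet ρ := by
  simpa using smul_mem_modularSet hρ (-1) hx

lemma add_mem_modularSet {x y : X} (hx : x ∈ modularSet ρ) (hy : y ∈ modularSet ρ) :
    x + y ∈ modularSet ρ := by
  obtain ⟨l₁, hl₁, h₁⟩ := hx
  obtain ⟨l₂, hl₂, h₂⟩ := hy
  have hs : 0 < l₁ + l₂ := by linarith
  set α : ℝ := l₂ / (l₁ + l₂) with hα
  have hα0 : 0 ≤ α := le_of_lt (div_pos hl₂ hs)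
  have hα1 : α ≤ 1 := by rw [hα, div_le_one hs]; linarith
  refine ⟨l₁ * l₂ / (l₁ + l₂), div_pos (mul_pos hl₁ hl₂) hs, ?_⟩
  have e1 : α * l₁ = l₁ * l₂ / (l₁ + l₂) := by rw [hα]; field_simp
  have e2 : (1 - α) * l₂ = l₁ * l₂ / (l₁ + l₂) := by
    have : (1 : ℝ) - α = l₁ / (l₁ + l₂) := by rw [hα]; field_simp; ring
    rw [this]; field_simp
  have key : (l₁ * l₂ / (l₁ + l₂)) • (x + y) = α • (l₁ • x) + (1 - α) • (l₂ • y) := by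
    rw [smul_smul, smul_smul, e1, e2, ← smul_add]
  rw [key]
  calc ρ (α • (l₁ • x) + (1 - α) • (l₂ • y))
      ≤ ENNReal.ofReal α * ρ (l₁ • x) + ENNReal.ofReal (1 - α) * ρ (l₂ • y) :=
        hρ.convex α hα0 hα1 _ _
    _ < ⊤ := by
        apply ENNReal.add_lt_top.mpr
        constructor <;> exact ENNReal.mul_lt_top ENNReal.ofReal_lt_top (by assumption)

lemma sub_mem_modularSet {x y : X} (hx : x ∈ modularSet ρ) (hy : y ∈ modularSet ρ) :
    x - y ∈ modularSet ρ := by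
  rw [sub_eq_add_neg]
  exact add_mem_modularSet hρ hx (neg_mem_modularSet hρ hy)

lemma ofReal_one_div_tendsto :
    Tendsto (fun j : ℕ => ENNReal.ofReal (1 / ((j : ℝ) + 1))) atTop (nhds 0) := by
  have h := ENNReal.tendsto_ofReal (a := 0) tendsto_one_div_add_atTop_nhds_zero_nat
  simpa using h

end helpers

/-- Characterizations of modularly continuous linear functionals on `X_ρ`.
With (i) modular continuity, (iii) sequential `ρ`-continuity at `0`,
(iv)–(vii) boundedness on modular balls, (viii) boundedness on sets of finite modular
diameter: (i) ⇔ (iii) ⇒ (iv) ⇔ (v) ⇔ (vi) ⇔ (vii) ⇒ (viii), and (i) implies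
boundedness with respect to the Luxemburg norm. -/
theorem modular_dual_characterization {X : Type*} [AddCommGroup X] [Module ℝ X]
    (ρ : X → ℝ≥0∞) (hρ : IsConvexModular ρ) (hlc : IsLeftContinuousModular ρ)
    (Λ : X → ℝ)
    (hadd : ∀ x ∈ modularSet ρ, ∀ y ∈ modularSet ρ, Λ (x + y) = Λ x + Λ y)
    (hsmul : ∀ (c : ℝ), ∀ x ∈ modularSet ρ, Λ (c • x) = c * Λ x) :
    -- (i) ⇔ (iii)
    ((∀ U : Set ℝ, IsOpen U → IsTauRhoOpen ρ (modularSet ρ ∩ Λ ⁻¹' U)) ↔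
      (∀ x : ℕ → X, (∀ j, x j ∈ modularSet ρ) →
        Tendsto (fun j => ρ (x j)) atTop (nhds 0) →
        Tendsto (fun j => Λ (x j)) atTop (nhds 0))) ∧
    -- (iii) ⇒ (iv)
    ((∀ x : ℕ → X, (∀ j, x j ∈ modularSet ρ) →
        Tendsto (fun j => ρ (x j)) atTop (nhds 0) →
        Tendsto (fun j => Λ (x j)) atTop (nhds 0)) →
      (∃ C : ℝ, ∀ x ∈ modularSet ρ, ρ x < 1 → |Λ x| ≤ C)) ∧
    -- (iv) ⇔ (v)
    ((∃ C : ℝ, ∀ x ∈ modularSet ρ, ρ x < 1 → |Λ x| ≤ C) ↔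
      (∃ C : ℝ, ∀ x ∈ modularSet ρ, ρ x ≤ 1 → |Λ x| ≤ C)) ∧
    -- (v) ⇔ (vi)
    ((∃ C : ℝ, ∀ x ∈ modularSet ρ, ρ x ≤ 1 → |Λ x| ≤ C) ↔
      (∀ x₀ ∈ modularSet ρ, ∀ r : ℝ, 0 < r →
        ∃ C : ℝ, ∀ x ∈ modularSet ρ, ρ (x - x₀) ≤ ENNReal.ofReal r → |Λ x| ≤ C)) ∧
    -- (vi) ⇔ (vii)
    ((∀ x₀ ∈ modularSet ρ, ∀ r : ℝ, 0 < r →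
        ∃ C : ℝ, ∀ x ∈ modularSet ρ, ρ (x - x₀) ≤ ENNReal.ofReal r → |Λ x| ≤ C) ↔
      (∀ x₀ ∈ modularSet ρ, ∀ r : ℝ, 0 < r →
        ∃ C : ℝ, ∀ x ∈ modularSet ρ, ρ (x - x₀) < ENNReal.ofReal r → |Λ x| ≤ C)) ∧
    -- (vii) ⇒ (viii)
    ((∀ x₀ ∈ modularSet ρ, ∀ r : ℝ, 0 < r →
        ∃ C : ℝ, ∀ x ∈ modularSet ρ, ρ (x - x₀) < ENNReal.ofReal r → |Λ x| ≤ C) →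
      (∀ A : Set X, A ⊆ modularSet ρ →
        (∃ M : ℝ≥0∞, M < ⊤ ∧ ∀ a ∈ A, ∀ b ∈ A, ρ (a - b) ≤ M) →
        ∃ C : ℝ, ∀ a ∈ A, |Λ a| ≤ C)) ∧
    -- (i) ⇒ norm-boundedness
    ((∀ U : Set ℝ, IsOpen U → IsTauRhoOpen ρ (modularSet ρ ∩ Λ ⁻¹' U)) →
      (∃ C : ℝ, 0 ≤ C ∧ ∀ x ∈ modularSet ρ, |Λ x| ≤ C * luxNorm ρ x)) := by
  have h0mem : (0 : X) ∈ modularSet ρ := zero_mem_modularSet hρ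
  have hΛ0 : Λ 0 = 0 := by
    have := hsmul 0 0 h0mem
    simpa using this
  -- (i) → (iii)
  have h13 : (∀ U : Set ℝ, IsOpen U → IsTauRhoOpen ρ (modularSet ρ ∩ Λ ⁻¹' U)) →
      (∀ x : ℕ → X, (∀ j, x j ∈ modularSet ρ) →
        Tendsto (fun j => ρ (x j)) atTop (nhds 0) →
        Tendsto (fun j => Λ (x j)) atTop (nhds 0)) := by
    intro hi x hxm hx0
    rw [NormedAddCommGroup.tendsto_nhds_zero]
    intro ε hε
    obtain ⟨hsub, hball⟩ := hi (Metric.ball (0 : ℝ) ε) Metric.isOpen_ball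
    obtain ⟨δ, hδ, hδsub⟩ := hball 0 ⟨h0mem, by simp [hΛ0, hε]⟩
    have hev : ∀ᶠ j in atTop, ρ (x j) < ENNReal.ofReal δ :=
      hx0.eventually_lt_const (ENNReal.ofReal_pos.mpr hδ)
    filter_upwards [hev] with j hj
    have hmem : x j ∈ modularSet ρ ∩ Λ ⁻¹' Metric.ball (0 : ℝ) ε :=
      hδsub ⟨hxm j, by simpa using hj⟩
    simpa [Real.norm_eq_abs, Real.dist_eq] using hmem.2
  -- (iii) → (i)
  have h31 : (∀ x : ℕ → X, (∀ j, x j ∈ modularSet ρ) →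
        Tendsto (fun j => ρ (x j)) atTop (nhds 0) →
        Tendsto (fun j => Λ (x j)) atTop (nhds 0)) →
      (∀ U : Set ℝ, IsOpen U → IsTauRhoOpen ρ (modularSet ρ ∩ Λ ⁻¹' U)) := by
    intro hiii U hU
    refine ⟨Set.inter_subset_left, ?_⟩
    intro x hx
    by_contra hcon
    push_neg at hcon
    have hsel : ∀ j : ℕ, ∃ y, (y ∈ modularSet ρ ∧ ρ (y - x) < ENNReal.ofReal (1 / ((j : ℝ) + 1)))
        ∧ y ∉ modularSet ρ ∩ Λ ⁻¹' U := by
      intro j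
      have h := hcon (1 / ((j : ℝ) + 1)) (by positivity)
      rw [Set.not_subset] at h
      obtain ⟨y, hy1, hy2⟩ := h
      exact ⟨y, ⟨hy1.1, hy1.2⟩, hy2⟩
    choose y hy1 hy2 using hsel
    set z : ℕ → X := fun j => y j - x with hz
    have hzm : ∀ j, z j ∈ modularSet ρ := fun j => sub_mem_modularSet hρ (hy1 j).1 hx.1
    have hz0 : Tendsto (fun j => ρ (z j)) atTop (nhds 0) := by
      refine tendsto_of_tendsto_of_tendsto_of_le_of_le tendsto_const_nhds
        (ofReal_one_div_tendsto hρ) (fun j => zero_le) (fun j => (hy1 j).2.le)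
    have hΛz : Tendsto (fun j => Λ (z j)) atTop (nhds 0) := hiii z hzm hz0
    have hΛy : Tendsto (fun j => Λ (y j)) atTop (nhds (Λ x)) := by
      have heq : ∀ j, Λ (y j) = Λ (z j) + Λ x := by
        intro j
        have : z j + x = y j := by simp [hz]
        rw [← this, hadd (z j) (hzm j) x hx.1]
      simp_rw [heq]
      simpa using hΛz.add_const (Λ x)
    have hev : ∀ᶠ j in atTop, Λ (y j) ∈ U := hΛy.eventually (hU.mem_nhds hx.2)
    obtain ⟨j, hj⟩ := hev.exists
    exact hy2 j ⟨(hy1 j).1, hj⟩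
  -- (iii) → (iv)
  have h34 : (∀ x : ℕ → X, (∀ j, x j ∈ modularSet ρ) →
        Tendsto (fun j => ρ (x j)) atTop (nhds 0) →
        Tendsto (fun j => Λ (x j)) atTop (nhds 0)) →
      (∃ C : ℝ, ∀ x ∈ modularSet ρ, ρ x < 1 → |Λ x| ≤ C) := by
    intro hiii
    by_contra hcon
    push_neg at hcon
    have hsel : ∀ j : ℕ, ∃ w ∈ modularSet ρ, ρ w < 1 ∧ ((j : ℝ) + 1) ^ 2 < |Λ w| :=
      fun j => hcon (((j : ℝ) + 1) ^ 2)
    choose w hw1 hw2 hw3 using hsel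
    set z : ℕ → X := fun j => (1 / ((j : ℝ) + 1)) • w j with hz
    have hzm : ∀ j, z j ∈ modularSet ρ := fun j => smul_mem_modularSet hρ _ (hw1 j)
    have hj1 : ∀ j : ℕ, (0 : ℝ) < (j : ℝ) + 1 := fun j => by positivity
    have hzle : ∀ j, ρ (z j) ≤ ENNReal.ofReal (1 / ((j : ℝ) + 1)) := by
      intro j
      have h1 : (0 : ℝ) ≤ 1 / ((j : ℝ) + 1) := by positivity
      have h2 : 1 / ((j : ℝ) + 1) ≤ 1 := by
        rw [div_le_one (hj1 j)]; linarith [Nat.cast_nonneg (α := ℝ) j]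
      calc ρ (z j) ≤ ENNReal.ofReal (1 / ((j : ℝ) + 1)) * ρ (w j) := rho_smul_le hρ h1 h2 _
        _ ≤ ENNReal.ofReal (1 / ((j : ℝ) + 1)) * 1 := by have := (hw2 j).le; gcongr
        _ = ENNReal.ofReal (1 / ((j : ℝ) + 1)) := mul_one _
    have hz0 : Tendsto (fun j => ρ (z j)) atTop (nhds 0) :=
      tendsto_of_tendsto_of_tendsto_of_le_of_le tendsto_const_nhds
        (ofReal_one_div_tendsto hρ) (fun j => zero_le) hzle
    have hΛz : Tendsto (fun j => Λ (z j)) atTop (nhds 0) := hiii z hzm hz0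
    have hge : ∀ j, (1 : ℝ) ≤ |Λ (z j)| := by
      intro j
      have heq : Λ (z j) = (1 / ((j : ℝ) + 1)) * Λ (w j) := hsmul _ _ (hw1 j)
      rw [heq, abs_mul, abs_of_pos (by positivity : (0:ℝ) < 1 / ((j : ℝ) + 1))]
      have h3 : ((j : ℝ) + 1) ^ 2 ≤ |Λ (w j)| := (hw3 j).le
      have h4 : (1 / ((j : ℝ) + 1)) * ((j : ℝ) + 1) ^ 2 = (j : ℝ) + 1 := by
        field_simp
      have h5 : (1 / ((j : ℝ) + 1)) * ((j : ℝ) + 1) ^ 2 ≤ (1 / ((j : ℝ) + 1)) * |Λ (w j)| :=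
        mul_le_mul_of_nonneg_left h3 (by positivity)
      linarith [Nat.cast_nonneg (α := ℝ) j]
    rw [NormedAddCommGroup.tendsto_nhds_zero] at hΛz
    obtain ⟨j, hj⟩ := (hΛz 1 one_pos).exists
    rw [Real.norm_eq_abs] at hj
    linarith [hge j]
  -- (iv) ↔ (v)
  have h45 : (∃ C : ℝ, ∀ x ∈ modularSet ρ, ρ x < 1 → |Λ x| ≤ C) ↔
      (∃ C : ℝ, ∀ x ∈ modularSet ρ, ρ x ≤ 1 → |Λ x| ≤ C) := by
    constructor
    · rintro ⟨C, hC⟩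
      refine ⟨C, fun x hx hx1 => ?_⟩
      have key : ∀ n : ℕ, (1 - 1 / ((n : ℝ) + 2)) * |Λ x| ≤ C := by
        intro n
        set t : ℝ := 1 - 1 / ((n : ℝ) + 2) with ht
        have hn2 : (0 : ℝ) < (n : ℝ) + 2 := by positivity
        have ht0 : 0 ≤ t := by
          rw [ht, sub_nonneg, div_le_one hn2]; linarith [Nat.cast_nonneg (α := ℝ) n]
        have ht1 : t < 1 := by
          rw [ht]; have : 0 < 1 / ((n : ℝ) + 2) := by positivity
          linarith
        have hρt : ρ (t • x) < 1 := by
          calc ρ (t • x) ≤ ENNReal.ofReal t * ρ x := rho_smul_le hρ ht0 ht1.le x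
            _ ≤ ENNReal.ofReal t * 1 := by gcongr
            _ = ENNReal.ofReal t := mul_one _
            _ < 1 := by rwa [ENNReal.ofReal_lt_one]
        have := hC (t • x) (smul_mem_modularSet hρ t hx) hρt
        rwa [hsmul t x hx, abs_mul, abs_of_nonneg ht0] at this
      have htend : Tendsto (fun n : ℕ => (1 - 1 / ((n : ℝ) + 2)) * |Λ x|) atTop
          (nhds (|Λ x|)) := by
        have h1 : Tendsto (fun n : ℕ => 1 / ((n : ℝ) + 2)) atTop (nhds 0) := by
          have := (tendsto_one_div_add_atTop_nhds_zero_nat (𝕜 := ℝ)).comp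
            (tendsto_add_atTop_nat 1)
          convert this using 2 with n
          simp [Function.comp]
          push_cast
          ring
        have h2 : Tendsto (fun n : ℕ => (1 - 1 / ((n : ℝ) + 2))) atTop (nhds 1) := by
          simpa using (tendsto_const_nhds (x := (1:ℝ)) (f := atTop (α := ℕ))).sub h1
        simpa using h2.mul_const (|Λ x|)
      exact le_of_tendsto htend (Filter.Eventually.of_forall key)
    · rintro ⟨C, hC⟩
      exact ⟨C, fun x hx h => hC x hx h.le⟩
  -- (v) ↔ (vi)
  have h56 : (∃ C : ℝ, ∀ x ∈ modularSet ρ, ρ x ≤ 1 → |Λ x| ≤ C) ↔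
      (∀ x₀ ∈ modularSet ρ, ∀ r : ℝ, 0 < r →
        ∃ C : ℝ, ∀ x ∈ modularSet ρ, ρ (x - x₀) ≤ ENNReal.ofReal r → |Λ x| ≤ C) := by
    constructor
    · rintro ⟨C, hC⟩ x₀ hx₀ r hr
      set t : ℝ := min 1 r⁻¹ with htdef
      have ht0 : 0 < t := lt_min one_pos (inv_pos.mpr hr)
      have ht1 : t ≤ 1 := min_le_left _ _
      have htr : t * r ≤ 1 := by
        calc t * r ≤ r⁻¹ * r := by
              apply mul_le_mul_of_nonneg_right (min_le_right _ _) hr.le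
          _ = 1 := inv_mul_cancel₀ hr.ne'
      refine ⟨C / t + |Λ x₀|, fun x hx hxr => ?_⟩
      set y : X := x - x₀ with hy
      have hym : y ∈ modularSet ρ := sub_mem_modularSet hρ hx hx₀
      have h1 : ρ (t • y) ≤ 1 := by
        calc ρ (t • y) ≤ ENNReal.ofReal t * ρ y := rho_smul_le hρ ht0.le ht1 y
          _ ≤ ENNReal.ofReal t * ENNReal.ofReal r := by gcongr
          _ = ENNReal.ofReal (t * r) := (ENNReal.ofReal_mul ht0.le).symm
          _ ≤ ENNReal.ofReal 1 := ENNReal.ofReal_le_ofReal htr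
          _ = 1 := ENNReal.ofReal_one
      have h2 : |Λ (t • y)| ≤ C := hC _ (smul_mem_modularSet hρ t hym) h1
      rw [hsmul t y hym, abs_mul, abs_of_pos ht0] at h2
      have h3 : |Λ y| ≤ C / t := by
        rw [le_div_iff₀ ht0]; linarith
      have h4 : Λ x = Λ y + Λ x₀ := by
        have : y + x₀ = x := by rw [hy]; abel
        rw [← this, hadd y hym x₀ hx₀]
      rw [h4]
      calc |Λ y + Λ x₀| ≤ |Λ y| + |Λ x₀| := abs_add_le _ _
        _ ≤ C / t + |Λ x₀| := by linarith
    · intro h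
      obtain ⟨C, hC⟩ := h 0 h0mem 1 one_pos
      exact ⟨C, fun x hx hx1 => hC x hx (by simpa using hx1)⟩
  -- (vi) ↔ (vii)
  have h67 : (∀ x₀ ∈ modularSet ρ, ∀ r : ℝ, 0 < r →
        ∃ C : ℝ, ∀ x ∈ modularSet ρ, ρ (x - x₀) ≤ ENNReal.ofReal r → |Λ x| ≤ C) ↔
      (∀ x₀ ∈ modularSet ρ, ∀ r : ℝ, 0 < r →
        ∃ C : ℝ, ∀ x ∈ modularSet ρ, ρ (x - x₀) < ENNReal.ofReal r → |Λ x| ≤ C) := by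
    constructor
    · intro h x₀ hx₀ r hr
      obtain ⟨C, hC⟩ := h x₀ hx₀ r hr
      exact ⟨C, fun x hx hlt => hC x hx hlt.le⟩
    · intro h x₀ hx₀ r hr
      obtain ⟨C, hC⟩ := h x₀ hx₀ (r + 1) (by linarith)
      refine ⟨C, fun x hx hle => hC x hx (lt_of_le_of_lt hle ?_)⟩
      exact (ENNReal.ofReal_lt_ofReal_iff (by linarith)).mpr (lt_add_one r)
  -- (vii) → (viii)
  have h78 : (∀ x₀ ∈ modularSet ρ, ∀ r : ℝ, 0 < r →
        ∃ C : ℝ, ∀ x ∈ modularSet ρ, ρ (x - x₀) < ENNReal.ofReal r → |Λ x| ≤ C) →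
      (∀ A : Set X, A ⊆ modularSet ρ →
        (∃ M : ℝ≥0∞, M < ⊤ ∧ ∀ a ∈ A, ∀ b ∈ A, ρ (a - b) ≤ M) →
        ∃ C : ℝ, ∀ a ∈ A, |Λ a| ≤ C) := by
    rintro h A hA ⟨M, hM, hdiam⟩
    rcases A.eq_empty_or_nonempty with rfl | ⟨a₀, ha₀⟩
    · exact ⟨0, fun a ha => absurd ha (Set.notMem_empty a)⟩
    · have hr : (0 : ℝ) < M.toReal + 1 := by positivity
      obtain ⟨C, hC⟩ := h a₀ (hA ha₀) (M.toReal + 1) hr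
      have hMr : M < ENNReal.ofReal (M.toReal + 1) := by
        rw [ENNReal.lt_ofReal_iff_toReal_lt hM.ne]
        linarith
      exact ⟨C, fun a ha => hC a (hA ha) (lt_of_le_of_lt (hdiam a ha a₀ ha₀) hMr)⟩
  -- norm boundedness from (i)
  have hnorm : (∀ U : Set ℝ, IsOpen U → IsTauRhoOpen ρ (modularSet ρ ∩ Λ ⁻¹' U)) →
      (∃ C : ℝ, 0 ≤ C ∧ ∀ x ∈ modularSet ρ, |Λ x| ≤ C * luxNorm ρ x) := by
    intro hi
    obtain ⟨C, hC⟩ := h45.mp (h34 (h13 hi))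
    have hC0 : 0 ≤ C := by
      have := hC 0 h0mem (by simp [rho_zero hρ])
      rw [hΛ0] at this
      simpa using this
    refine ⟨C, hC0, fun x hx => ?_⟩
    set S : Set ℝ := {l : ℝ | 0 < l ∧ ρ (l⁻¹ • x) ≤ 1} with hS
    have hne : S.Nonempty := by
      obtain ⟨l₀, hl₀, hfin⟩ := hx
      set R : ℝ := (ρ (l₀ • x)).toReal with hR
      have hR0 : 0 ≤ R := ENNReal.toReal_nonneg
      set t : ℝ := 1 / (R + 1) with htdef
      have ht0 : 0 < t := by positivity
      have ht1 : t ≤ 1 := by rw [htdef, div_le_one (by linarith)]; linarith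
      refine ⟨(t * l₀)⁻¹, inv_pos.mpr (mul_pos ht0 hl₀), ?_⟩
      rw [inv_inv, ← smul_smul]
      calc ρ (t • l₀ • x) ≤ ENNReal.ofReal t * ρ (l₀ • x) := rho_smul_le hρ ht0.le ht1 _
        _ = ENNReal.ofReal t * ENNReal.ofReal R := by rw [ENNReal.ofReal_toReal hfin.ne]
        _ = ENNReal.ofReal (t * R) := (ENNReal.ofReal_mul ht0.le).symm
        _ ≤ ENNReal.ofReal 1 := by
            apply ENNReal.ofReal_le_ofReal
            rw [htdef]
            rw [div_mul_eq_mul_div, one_mul, div_le_one (by linarith)]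
            linarith
        _ = 1 := ENNReal.ofReal_one
    have hbd : BddBelow S := ⟨0, fun l hl => hl.1.le⟩
    have key : ∀ l ∈ S, |Λ x| ≤ C * l := by
      rintro l ⟨hl0, hl1⟩
      have hmem : l⁻¹ • x ∈ modularSet ρ := smul_mem_modularSet hρ _ hx
      have heq : Λ x = l * Λ (l⁻¹ • x) := by
        conv_lhs => rw [← smul_inv_smul₀ hl0.ne' x]
        exact hsmul l _ hmem
      rw [heq, abs_mul, abs_of_pos hl0]
      calc l * |Λ (l⁻¹ • x)| ≤ l * C :=
            mul_le_mul_of_nonneg_left (hC _ hmem hl1) hl0.le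
        _ = C * l := mul_comm _ _
    have hlux : luxNorm ρ x = sInf S := rfl
    rcases eq_or_lt_of_le hC0 with hCeq | hCpos
    · obtain ⟨l, hl⟩ := hne
      have h1 := key l hl
      rw [← hCeq, zero_mul] at h1
      rw [← hCeq, zero_mul]
      exact h1
    · have h1 : |Λ x| / C ≤ sInf S := by
        apply le_csInf hne
        intro l hl
        rw [div_le_iff₀ hCpos]
        calc |Λ x| ≤ C * l := key l hl
          _ = l * C := mul_comm _ _
      rw [hlux]
      calc |Λ x| = |Λ x| / C * C := by field_simp
        _ ≤ sInf S * C := mul_le_mul_of_nonneg_right h1 hCpos.le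
        _ = C * sInf S := mul_comm _ _
  exact ⟨⟨h13, h31⟩, h34, h45, h56, h67, h78, hnorm⟩
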